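/- Fix a finite height h > 0, n ∈ ω, and let k = n(h+1). For every h-tree M (possibly infinite), there is a finite h-tree Y (namely one whose root has the same (k,h)-color as the root of M) such that Duplicator has a winning strategy in the n-round Ehrenfeucht–Fraïssé game between M and Y over L_h. -/

import Mathlib

open Set
open scoped Classical

/-- An `h`-forest: the reduct to the language `L_h = {P₀,…,P_h, <₀,…,<_{h−1}}` of a model of the
leveled-forest theory `T₀` (levels beyond `h` are empty, i.e. forgotten). -/
structure HForest (h : ℕ) where
  α : Type
  P : ℕ → Set α
  lt : ℕ → α → α → Prop
  disj : ∀ i j, i ≠ j → ∀ x, x ∈ P i → x ∉ P j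
  dom : ∀ i x y, lt i x y → x ∈ P i ∧ y ∈ P (i + 1)
  exists_pred : ∀ i y, y ∈ P (i + 1) → ∃ x, lt i x y
  unique_pred : ∀ i x x' y, lt i x y → lt i x' y → x = x'
  bddP : ∀ i, h < i → P i = ∅
  bddlt : ∀ i, h ≤ i → ∀ x y, ¬ lt i x y

/-- The `σ`-part of a `(k,h)`-color of a node with `d` levels remaining above it:
a set of pairs (color of an immediate successor, number of such successors capped at `k`). -/
def ColorSig : ℕ → Type
  | 0 => PUnit
  | d + 1 => Set (ColorSig d × ℕ)

/-- The `σ`-part of the `k`-bounded coloring of the `h`-forest `F`, computed inductively from the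
leaves down: `sig k F d x` is the `σ`-color of `x` viewed as a node at level `h - d`. -/
noncomputable def sig (k : ℕ) {h : ℕ} (F : HForest h) : (d : ℕ) → F.α → ColorSig d
  | 0, _ => PUnit.unit
  | d + 1, x =>
    {p | (∃ y, F.lt (h - (d + 1)) x y ∧ sig k F d y = p.1) ∧
      p.2 = (min (k : ℕ∞) {z | F.lt (h - (d + 1)) x z ∧ sig k F d z = p.1}.encard).toNat}

/-- A `(k,h)`-color: a level `l ∈ {0,…,h}` together with a `σ`-part (or `none`, representing
level `-1`, for elements lying in no `Pᵢ` with `i ≤ h`). -/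
def Color (h : ℕ) : Type := Option ((l : Fin (h + 1)) × ColorSig (h - l))

/-- The `(k,h)`-color of an element of an `h`-forest. -/
noncomputable def colorOf (k : ℕ) {h : ℕ} (F : HForest h) (x : F.α) : Color h :=
  if hx : ∃ l : Fin (h + 1), x ∈ F.P l then some ⟨hx.choose, sig k F (h - hx.choose) x⟩
  else none

/-- `s` is (the graph of) a partial isomorphism between the `h`-forests `F` and `G`
(in the language `L_h`). -/
def PIso {h : ℕ} (F G : HForest h) (s : List (F.α × G.α)) : Prop :=
  (∀ p ∈ s, ∀ q ∈ s, p.1 = q.1 ↔ p.2 = q.2) ∧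
  (∀ p ∈ s, ∀ i, p.1 ∈ F.P i ↔ p.2 ∈ G.P i) ∧
  (∀ p ∈ s, ∀ q ∈ s, ∀ i, F.lt i p.1 q.1 ↔ G.lt i p.2 q.2)

/-- Duplicator (∃) has a winning strategy in the `n`-round Ehrenfeucht–Fraïssé game between the
`h`-forests `F` and `G` (over `L_h`), starting from the position `s`: the position is a partial
isomorphism, and whichever structure Spoiler picks a new element in, Duplicator can reply in the
other structure so as to keep winning. -/
def EFWin {h : ℕ} (F G : HForest h) : ℕ → List (F.α × G.α) → Prop
  | 0, s => PIso F G s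
  | n + 1, s => PIso F G s ∧ (∀ a : F.α, ∃ b : G.α, EFWin F G n ((a, b) :: s)) ∧
      (∀ b : G.α, ∃ a : F.α, EFWin F G n ((a, b) :: s))

-- test: sig_succ as rfl at Set type
lemma sig_succ (k : ℕ) {h : ℕ} (F : HForest h) (d : ℕ) (x : F.α) :
    sig k F (d+1) x = ({p | (∃ y, F.lt (h - (d + 1)) x y ∧ sig k F d y = p.1) ∧
      p.2 = (min (k : ℕ∞) {z | F.lt (h - (d + 1)) x z ∧ sig k F d z = p.1}.encard).toNat} :
      Set (ColorSig d × ℕ)) := rfl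

lemma sig_zero (k : ℕ) {h : ℕ} (F : HForest h) (x : F.α) :
    sig k F 0 x = PUnit.unit := rfl


lemma sig_bounded (k : ℕ) (d : ℕ) : ∃ S : Set (ColorSig d), S.Finite ∧
    ∀ (h : ℕ) (F : HForest h) (x : F.α), sig k F d x ∈ S := by
  induction d with
  | zero =>
    refine ⟨{PUnit.unit}, Set.finite_singleton _, fun h F x => ?_⟩
    simp [sig_zero]
    exact Set.mem_singleton _
  | succ d ih =>
    obtain ⟨S, hSfin, hmem⟩ := ih
    refine ⟨({T : Set (ColorSig d × ℕ) | T ⊆ S ×ˢ Set.Iic k} : Set (Set (ColorSig d × ℕ))),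
      ?_, fun h F x => ?_⟩
    · exact (hSfin.prod (Set.finite_Iic k)).finite_subsets
    · show sig k F (d+1) x ∈ {T : Set (ColorSig d × ℕ) | T ⊆ S ×ˢ Set.Iic k}
      rw [sig_succ]
      intro p hp
      obtain ⟨⟨y, _, hy2⟩, hp2⟩ := hp
      constructor
      · rw [← hy2]; exact hmem _ F y
      · simp only [Set.mem_Iic, hp2]
        calc (min (k : ℕ∞) {z | F.lt (h - (d+1)) x z ∧ sig k F d z = p.1}.encard).toNat
            ≤ (k : ℕ∞).toNat := ENat.toNat_le_toNat (min_le_left _ _) (by simp)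
          _ = k := by simp

namespace EFAux

variable {h : ℕ}

def Junk {h : ℕ} (F : HForest h) : Set F.α := {x | ∀ i, x ∉ F.P i}

def Inv (k : ℕ) (F G : HForest h) (t : List (F.α × G.α)) : Prop :=
  PIso F G t ∧
  (∀ p ∈ t, ∀ l, p.1 ∈ F.P l → sig k F (h - l) p.1 = sig k G (h - l) p.2) ∧
  (∀ p ∈ t, ∀ i x, F.lt i x p.1 → ∃ y, G.lt i y p.2 ∧ (x, y) ∈ t) ∧
  (∀ p ∈ t, ∀ i y, G.lt i y p.2 → ∃ x, F.lt i x p.1 ∧ (x, y) ∈ t)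

def Hyp (k : ℕ) (F G : HForest h) : Prop :=
  (∃! r, r ∈ F.P 0) ∧ (∃! r, r ∈ G.P 0) ∧
  (∀ rF rG, rF ∈ F.P 0 → rG ∈ G.P 0 → sig k F h rF = sig k G h rG) ∧
  min (k : ℕ∞) (Junk F).encard = min (k : ℕ∞) (Junk G).encard

lemma piso_mono {F G : HForest h} {s t : List (F.α × G.α)} (hsub : ∀ x ∈ s, x ∈ t)
    (ht : PIso F G t) : PIso F G s :=
  ⟨fun p hp q hq => ht.1 p (hsub p hp) q (hsub q hq),
   fun p hp => ht.2.1 p (hsub p hp),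
   fun p hp q hq => ht.2.2 p (hsub p hp) q (hsub q hq)⟩

lemma inv_swap {k : ℕ} {F G : HForest h} {t : List (F.α × G.α)} (hI : Inv k F G t) :
    Inv k G F (t.map Prod.swap) := by
  obtain ⟨⟨h1, h2, h3⟩, hsig, hcf, hcg⟩ := hI
  have hm : ∀ p : G.α × F.α, p ∈ t.map Prod.swap → (p.2, p.1) ∈ t := by
    intro p hp
    obtain ⟨q, hq, rfl⟩ := List.mem_map.1 hp
    simpa using hq
  refine ⟨⟨?_, ?_, ?_⟩, ?_, ?_, ?_⟩
  · intro p hp q hq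
    exact (h1 _ (hm p hp) _ (hm q hq)).symm
  · intro p hp i
    exact (h2 _ (hm p hp) i).symm
  · intro p hp q hq i
    exact (h3 _ (hm p hp) _ (hm q hq) i).symm
  · intro p hp l hl
    have := hsig _ (hm p hp) l (((h2 _ (hm p hp)) l).mpr hl)
    exact this.symm
  · intro p hp i x hx
    obtain ⟨y, hy, hmem⟩ := hcg _ (hm p hp) i x hx
    exact ⟨y, hy, List.mem_map.2 ⟨(y, x), hmem, rfl⟩⟩
  · intro p hp i y hy
    obtain ⟨x, hx, hmem⟩ := hcf _ (hm p hp) i y hy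
    exact ⟨x, hx, List.mem_map.2 ⟨(y, x), hmem, rfl⟩⟩

lemma hyp_swap {k : ℕ} {F G : HForest h} (H : Hyp k F G) : Hyp k G F :=
  ⟨H.2.1, H.1, fun rG rF h1 h2 => (H.2.2.1 rF rG h2 h1).symm, H.2.2.2.symm⟩

lemma encard_mem_list_le {β : Type} (t : List β) : {p | p ∈ t}.encard ≤ t.length := by
  induction t with
  | nil => simp
  | cons a t ih =>
    have : {p | p ∈ a :: t} = insert a {p | p ∈ t} := by ext p; simp
    rw [this]
    calc (insert a {p | p ∈ t}).encard ≤ {p | p ∈ t}.encard + 1 := Set.encard_insert_le _ _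
      _ ≤ (t.length : ℕ∞) + 1 := by exact add_le_add ih le_rfl
      _ = ((a :: t).length : ℕ∞) := by simp [add_comm]

lemma exists_fresh {k : ℕ} {F G : HForest h} {t : List (F.α × G.α)}
    (hiso : PIso F G t) {SF : Set F.α} {SG : Set G.α} {a : F.α} (ha : a ∈ SF)
    (hadom : ∀ b, (a, b) ∉ t)
    (hmin : min (k : ℕ∞) SF.encard = min (k : ℕ∞) SG.encard)
    (hlen : t.length + 1 ≤ k)
    (hback : ∀ p ∈ t, p.2 ∈ SG → p.1 ∈ SF) :
    ∃ b ∈ SG, ∀ x, (x, b) ∉ t := by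
  by_contra hcon
  push_neg at hcon
  have hcon' : ∀ b : G.α, ∃ x : F.α, b ∈ SG → (x, b) ∈ t := by
    intro b
    by_cases hb : b ∈ SG
    · exact (hcon b hb).imp fun x hx => fun _ => hx
    · exact ⟨a, fun hmem => absurd hmem hb⟩
  choose f hf using hcon'
  have hinj : Set.InjOn f SG := by
    intro b1 hb1 b2 hb2 heq
    exact (hiso.1 _ (hf b1 hb1) _ (hf b2 hb2)).1 heq
  have himg : f '' SG ⊆ SF \ {a} := by
    rintro _ ⟨b, hb, rfl⟩
    refine ⟨hback _ (hf b hb) hb, ?_⟩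
    intro hfa
    exact hadom b (by rw [← hfa]; exact hf b hb)
  have hSGcard : SG.encard ≤ t.length := by
    have hinj2 : Set.InjOn (fun b => (f b, b)) SG := by
      intro b1 _ b2 _ heq
      simpa using congrArg Prod.snd heq
    calc SG.encard = ((fun b => (f b, b)) '' SG).encard := (hinj2.encard_image).symm
      _ ≤ {p | p ∈ t}.encard := Set.encard_le_encard (by rintro _ ⟨b, hb, rfl⟩; exact hf b hb)
      _ ≤ t.length := encard_mem_list_le t
  have hklt : (t.length : ℕ∞) < k := by exact_mod_cast hlen
  have hSGlt : SG.encard < k := lt_of_le_of_lt hSGcard hklt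
  have hminG : min (k : ℕ∞) SG.encard = SG.encard := min_eq_right hSGlt.le
  have hFG : SF.encard = SG.encard := by
    rw [hminG] at hmin
    by_cases hc : SF.encard ≤ k
    · rwa [min_eq_right hc] at hmin
    · push_neg at hc
      rw [min_eq_left hc.le] at hmin
      exact absurd hmin.symm hSGlt.ne
  have hSFfin : SF.encard ≠ ⊤ := by rw [hFG]; exact hSGlt.ne_top
  have hle : SF.encard ≤ (SF \ {a}).encard := by
    rw [hFG]
    calc SG.encard = (f '' SG).encard := hinj.encard_image.symm
      _ ≤ (SF \ {a}).encard := Set.encard_le_encard himg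
  have hlt : (SF \ {a}).encard < SF.encard := by
    rw [← Set.encard_diff_singleton_add_one ha]
    have hne : (SF \ {a}).encard ≠ ⊤ := by
      intro htop
      rw [← Set.encard_diff_singleton_add_one ha, htop] at hSFfin
      simp at hSFfin
    exact (ENat.lt_add_one_iff hne).mpr le_rfl
  exact absurd (lt_of_le_of_lt hle hlt) (lt_irrefl _)

lemma inv_cons {k : ℕ} {F G : HForest h} {t : List (F.α × G.α)} (hI : Inv k F G t)
    {a : F.α} {b : G.α}
    (hadom : ∀ y, (a, y) ∉ t) (hbran : ∀ x, (x, b) ∉ t)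
    (hP : ∀ i, a ∈ F.P i ↔ b ∈ G.P i)
    (hsig : ∀ l, a ∈ F.P l → sig k F (h - l) a = sig k G (h - l) b)
    (hpredF : ∀ i x, F.lt i x a → ∃ y, G.lt i y b ∧ (x, y) ∈ t)
    (hpredG : ∀ i y, G.lt i y b → ∃ x, F.lt i x a ∧ (x, y) ∈ t) :
    Inv k F G ((a, b) :: t) := by
  obtain ⟨⟨h1, h2, h3⟩, hsg, hcf, hcg⟩ := hI
  have hltF : ∀ i x y, (x, y) ∈ t → ¬ F.lt i a x := by
    intro i x y hxy hlt
    obtain ⟨y0, _, hmem⟩ := hcf _ hxy i a hlt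
    exact hadom y0 hmem
  have hltG : ∀ i x y, (x, y) ∈ t → ¬ G.lt i b y := by
    intro i x y hxy hlt
    obtain ⟨x0, _, hmem⟩ := hcg _ hxy i b hlt
    exact hbran x0 hmem
  refine ⟨⟨?_, ?_, ?_⟩, ?_, ?_, ?_⟩
  · simp only [List.mem_cons]
    rintro p (rfl | hp) q (rfl | hq)
    · simp
    · constructor
      · rintro rfl; exact absurd hq (hadom _)
      · rintro rfl; exact absurd hq (hbran _)
    · constructor
      · rintro rfl; exact absurd hp (hadom _)
      · rintro rfl; exact absurd hp (hbran _)
    · exact h1 p hp q hq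
  · simp only [List.mem_cons]
    rintro p (rfl | hp)
    · exact hP
    · exact h2 p hp
  · simp only [List.mem_cons]
    rintro p (rfl | hp) q (rfl | hq) i
    · constructor
      · intro hlt
        obtain ⟨y, _, hmem⟩ := hpredF i a hlt
        exact absurd hmem (hadom y)
      · intro hlt
        obtain ⟨x, _, hmem⟩ := hpredG i b hlt
        exact absurd hmem (hbran x)
    · -- p = (a,b), q ∈ t : lt i a q.1 ↔ lt i b q.2 : both false
      constructor
      · intro hlt; exact absurd hlt (hltF i q.1 q.2 hq)
      · intro hlt; exact absurd hlt (hltG i q.1 q.2 hq)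
    · -- p ∈ t, q = (a,b) : lt i p.1 a ↔ lt i p.2 b
      constructor
      · intro hlt
        obtain ⟨y, hy, hmem⟩ := hpredF i p.1 hlt
        have : p.2 = y := (h1 p hp _ hmem).1 rfl
        rwa [this]
      · intro hlt
        obtain ⟨x, hx, hmem⟩ := hpredG i p.2 hlt
        have : p.1 = x := (h1 p hp _ hmem).2 rfl
        rwa [this]
    · exact h3 p hp q hq i
  · simp only [List.mem_cons]
    rintro p (rfl | hp)
    · exact hsig
    · exact hsg p hp
  · simp only [List.mem_cons]
    rintro p (rfl | hp) i x hx
    · obtain ⟨y, hy, hmem⟩ := hpredF i x hx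
      exact ⟨y, hy, Or.inr hmem⟩
    · obtain ⟨y, hy, hmem⟩ := hcf p hp i x hx
      exact ⟨y, hy, Or.inr hmem⟩
  · simp only [List.mem_cons]
    rintro p (rfl | hp) i y hy
    · obtain ⟨x, hx, hmem⟩ := hpredG i y hy
      exact ⟨x, hx, Or.inr hmem⟩
    · obtain ⟨x, hx, hmem⟩ := hcg p hp i y hy
      exact ⟨x, hx, Or.inr hmem⟩

lemma min_toNat_inj {a b : ℕ∞} {k : ℕ} (h : (min (k:ℕ∞) a).toNat = (min (k:ℕ∞) b).toNat) :
    min (k:ℕ∞) a = min (k:ℕ∞) b := by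
  have ha : min (k:ℕ∞) a ≠ ⊤ := ne_top_of_le_ne_top (by simp) (min_le_left _ _)
  have hb : min (k:ℕ∞) b ≠ ⊤ := ne_top_of_le_ne_top (by simp) (min_le_left _ _)
  rw [← ENat.coe_toNat ha, ← ENat.coe_toNat hb, h]

lemma count_eq {k : ℕ} {F G : HForest h} {d : ℕ} {x : F.α} {y : G.α}
    (hs : sig k F (d+1) x = sig k G (d+1) y) (c : ColorSig d) :
    min (k:ℕ∞) {z | F.lt (h-(d+1)) x z ∧ sig k F d z = c}.encard
      = min (k:ℕ∞) {z | G.lt (h-(d+1)) y z ∧ sig k G d z = c}.encard := by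
  set SF := {z | F.lt (h-(d+1)) x z ∧ sig k F d z = c} with hSF
  set SG := {z | G.lt (h-(d+1)) y z ∧ sig k G d z = c} with hSG
  have hs' : ({p | (∃ w, F.lt (h - (d + 1)) x w ∧ sig k F d w = p.1) ∧
      p.2 = (min (k : ℕ∞) {z | F.lt (h - (d + 1)) x z ∧ sig k F d z = p.1}.encard).toNat} :
      Set (ColorSig d × ℕ)) =
      {p | (∃ w, G.lt (h - (d + 1)) y w ∧ sig k G d w = p.1) ∧
      p.2 = (min (k : ℕ∞) {z | G.lt (h - (d + 1)) y z ∧ sig k G d z = p.1}.encard).toNat} := hs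
  by_cases hF : SF.Nonempty
  · obtain ⟨z, hz1, hz2⟩ := hF
    have hmem : ((c, (min (k:ℕ∞) SF.encard).toNat) : ColorSig d × ℕ) ∈
        ({p | (∃ w, F.lt (h - (d + 1)) x w ∧ sig k F d w = p.1) ∧
        p.2 = (min (k : ℕ∞) {z | F.lt (h - (d + 1)) x z ∧ sig k F d z = p.1}.encard).toNat} :
        Set (ColorSig d × ℕ)) := ⟨⟨z, hz1, hz2⟩, rfl⟩
    rw [hs'] at hmem
    exact min_toNat_inj hmem.2
  · by_cases hG : SG.Nonempty
    · obtain ⟨z, hz1, hz2⟩ := hG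
      have hmem : ((c, (min (k:ℕ∞) SG.encard).toNat) : ColorSig d × ℕ) ∈
          ({p | (∃ w, G.lt (h - (d + 1)) y w ∧ sig k G d w = p.1) ∧
          p.2 = (min (k : ℕ∞) {z | G.lt (h - (d + 1)) y z ∧ sig k G d z = p.1}.encard).toNat} :
          Set (ColorSig d × ℕ)) := ⟨⟨z, hz1, hz2⟩, rfl⟩
      rw [← hs'] at hmem
      exact absurd ⟨_, hmem.1.choose_spec.1, hmem.1.choose_spec.2⟩ hF
    · rw [Set.not_nonempty_iff_eq_empty] at hF hG
      rw [hF, hG, Set.encard_empty, Set.encard_empty]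

lemma extend_level {k : ℕ} {F G : HForest h} (H : Hyp k F G) :
    ∀ l (t : List (F.α × G.α)), Inv k F G t → t.length + l + 1 ≤ k → ∀ a ∈ F.P l,
    ∃ b t', Inv k F G t' ∧ (a, b) ∈ t' ∧ (∀ x ∈ t, x ∈ t') ∧
      t'.length ≤ t.length + l + 1 := by
  intro l
  induction l with
  | zero =>
    intro t hI hlen a ha
    by_cases hdom : ∃ b, (a, b) ∈ t
    · obtain ⟨b, hb⟩ := hdom
      exact ⟨b, t, hI, hb, fun x hx => hx, by omega⟩
    · push_neg at hdom
      obtain ⟨rG, hrG, hrGu⟩ := H.2.1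
      have hbran : ∀ x, (x, rG) ∉ t := by
        intro x hx
        have hx0 : x ∈ F.P 0 := (hI.1.2.1 _ hx 0).mpr hrG
        have : x = a := by
          obtain ⟨rF, hrF, hrFu⟩ := H.1
          rw [hrFu x hx0, ← hrFu a ha]
        exact hdom rG (this ▸ hx)
      have haP : ∀ i, a ∈ F.P i ↔ i = 0 := by
        intro i
        constructor
        · intro hi
          by_contra hne
          exact F.disj i 0 hne a hi ha
        · rintro rfl; exact ha
      have hrGP : ∀ i, rG ∈ G.P i ↔ i = 0 := by
        intro i
        constructor
        · intro hi
          by_contra hne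
          exact G.disj i 0 hne rG hi hrG
        · rintro rfl; exact hrG
      refine ⟨rG, (a, rG) :: t, inv_cons hI hdom hbran ?_ ?_ ?_ ?_, List.mem_cons_self,
        fun x hx => List.mem_cons_of_mem _ hx, by rw [List.length_cons]⟩
      · intro i; rw [haP, hrGP]
      · intro l' hl'
        have : l' = 0 := (haP l').mp hl'
        subst this
        exact H.2.2.1 a rG ha hrG
      · intro i z hz
        exfalso
        have : a ∈ F.P (i+1) := (F.dom i z a hz).2
        exact absurd ((haP (i+1)).mp this) (Nat.succ_ne_zero i)
      · intro i z hz
        exfalso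
        have : rG ∈ G.P (i+1) := (G.dom i z rG hz).2
        exact absurd ((hrGP (i+1)).mp this) (Nat.succ_ne_zero i)
  | succ l ih =>
    intro t hI hlen a ha
    by_cases hdom : ∃ b, (a, b) ∈ t
    · obtain ⟨b, hb⟩ := hdom
      exact ⟨b, t, hI, hb, fun x hx => hx, by omega⟩
    · push_neg at hdom
      obtain ⟨p, hp⟩ := F.exists_pred l a ha
      have hpl : p ∈ F.P l := (F.dom l p a hp).1
      obtain ⟨q, t₁, hI₁, hpq₁, hsub₁, hlen₁⟩ := ih t hI (by omega) p hpl
      by_cases hdom₁ : ∃ b, (a, b) ∈ t₁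
      · obtain ⟨b, hb⟩ := hdom₁
        exact ⟨b, t₁, hI₁, hb, hsub₁, by omega⟩
      · push_neg at hdom₁
        have hlh : l + 1 ≤ h := by
          by_contra hcon
          rw [F.bddP (l+1) (by omega)] at ha
          exact ha
        have hd1 : h - l = (h - (l + 1)) + 1 := by omega
        have hdl : h - ((h - (l+1)) + 1) = l := by omega
        set d := h - (l + 1) with hdd
        have hsigpq : sig k F (d+1) p = sig k G (d+1) q := by
          have := hI₁.2.1 _ hpq₁ l hpl
          rwa [hd1] at this
        set c := sig k F d a with hc
        have hcount := count_eq hsigpq c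
        rw [hdl] at hcount
        have hql : q ∈ G.P l := (hI₁.1.2.1 _ hpq₁ l).mp hpl
        have hback : ∀ r ∈ t₁, r.2 ∈ {z | G.lt l q z ∧ sig k G d z = c} →
            r.1 ∈ {z | F.lt l p z ∧ sig k F d z = c} := by
          rintro r hr ⟨hr1, hr2⟩
          obtain ⟨x', hx', hmem'⟩ := hI₁.2.2.2 _ hr l q hr1
          have hx'p : x' = p := (hI₁.1.1 _ hmem' _ hpq₁).2 rfl
          rw [hx'p] at hx'
          refine ⟨hx', ?_⟩
          have hrP : r.1 ∈ F.P (l+1) := (F.dom l p r.1 hx').2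
          have := hI₁.2.1 _ hr (l+1) hrP
          rw [← hdd] at this
          rw [this, hr2]
        obtain ⟨b, hbmem, hbran⟩ := exists_fresh hI₁.1 (⟨hp, rfl⟩ :
            a ∈ {z | F.lt l p z ∧ sig k F d z = c}) hdom₁ hcount (by omega) hback
        obtain ⟨hblt, hbsig⟩ := hbmem
        have haP : ∀ i, a ∈ F.P i ↔ i = l + 1 := by
          intro i
          constructor
          · intro hi
            by_contra hne
            exact F.disj i (l+1) hne a hi ha
          · rintro rfl; exact ha
        have hbP : ∀ i, b ∈ G.P i ↔ i = l + 1 := by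
          have hb1 : b ∈ G.P (l+1) := (G.dom l q b hblt).2
          intro i
          constructor
          · intro hi
            by_contra hne
            exact G.disj i (l+1) hne b hi hb1
          · rintro rfl; exact hb1
        refine ⟨b, (a, b) :: t₁, inv_cons hI₁ hdom₁ hbran ?_ ?_ ?_ ?_, List.mem_cons_self,
          fun x hx => List.mem_cons_of_mem _ (hsub₁ x hx), by rw [List.length_cons]; omega⟩
        · intro i; rw [haP, hbP]
        · intro l' hl'
          have : l' = l + 1 := (haP l').mp hl'
          subst this
          rw [← hdd, ← hc, hbsig]
        · intro i z hz
          have hi : i = l := by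
            have : a ∈ F.P (i+1) := (F.dom i z a hz).2
            have := (haP (i+1)).mp this
            omega
          rw [hi] at hz ⊢
          have hzp : z = p := F.unique_pred l z p a hz hp
          rw [hzp]
          exact ⟨q, hblt, hpq₁⟩
        · intro i z hz
          have hi : i = l := by
            have : b ∈ G.P (i+1) := (G.dom i z b hz).2
            have := (hbP (i+1)).mp this
            omega
          rw [hi] at hz ⊢
          have hzq : z = q := G.unique_pred l z q b hz hblt
          rw [hzq]
          exact ⟨p, hp, hpq₁⟩

lemma extend_junk {k : ℕ} {F G : HForest h} (H : Hyp k F G) (t : List (F.α × G.α))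
    (hI : Inv k F G t) (hlen : t.length + 1 ≤ k) (a : F.α) (ha : a ∈ Junk F) :
    ∃ b t', Inv k F G t' ∧ (a, b) ∈ t' ∧ (∀ x ∈ t, x ∈ t') ∧
      t'.length ≤ t.length + 1 := by
  by_cases hdom : ∃ b, (a, b) ∈ t
  · obtain ⟨b, hb⟩ := hdom
    exact ⟨b, t, hI, hb, fun x hx => hx, by omega⟩
  · push_neg at hdom
    have hback : ∀ r ∈ t, r.2 ∈ Junk G → r.1 ∈ Junk F := by
      intro r hr hr2 i hi
      exact hr2 i ((hI.1.2.1 _ hr i).mp hi)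
    obtain ⟨b, hb, hbran⟩ := exists_fresh hI.1 ha hdom H.2.2.2 hlen hback
    refine ⟨b, (a, b) :: t, inv_cons hI hdom hbran ?_ ?_ ?_ ?_, List.mem_cons_self,
      fun x hx => List.mem_cons_of_mem _ hx, by rw [List.length_cons]⟩
    · intro i
      constructor
      · intro hi; exact absurd hi (ha i)
      · intro hi; exact absurd hi (hb i)
    · intro l' hl'; exact absurd hl' (ha l')
    · intro i z hz
      exact absurd (F.dom i z a hz).2 (ha (i+1))
    · intro i z hz
      exact absurd (G.dom i z b hz).2 (hb (i+1))

lemma extend_any {k : ℕ} {F G : HForest h} (H : Hyp k F G) (t : List (F.α × G.α))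
    (hI : Inv k F G t) (hlen : t.length + (h + 1) ≤ k) (a : F.α) :
    ∃ b t', Inv k F G t' ∧ (a, b) ∈ t' ∧ (∀ x ∈ t, x ∈ t') ∧
      t'.length ≤ t.length + (h + 1) := by
  by_cases hP : ∃ l, a ∈ F.P l
  · obtain ⟨l, hl⟩ := hP
    have hlh : l ≤ h := by
      by_contra hcon
      rw [F.bddP l (by omega)] at hl
      exact hl
    obtain ⟨b, t', h1, h2, h3, h4⟩ := extend_level H l t hI (by omega) a hl
    exact ⟨b, t', h1, h2, h3, by omega⟩
  · push_neg at hP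
    obtain ⟨b, t', h1, h2, h3, h4⟩ := extend_junk H t hI (by omega) a hP
    exact ⟨b, t', h1, h2, h3, by omega⟩

lemma ef_win {k : ℕ} {F G : HForest h} (H : Hyp k F G) :
    ∀ m (s t : List (F.α × G.α)), (∀ x ∈ s, x ∈ t) → Inv k F G t →
      t.length + m * (h + 1) ≤ k → EFWin F G m s := by
  intro m
  induction m with
  | zero =>
    intro s t hsub hI _
    exact piso_mono hsub hI.1
  | succ m ih =>
    intro s t hsub hI hlen
    refine ⟨piso_mono hsub hI.1, ?_, ?_⟩
    · intro a
      obtain ⟨b, t', h1, h2, h3, h4⟩ := extend_any H t hI (by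
        have : (h+1) ≤ (m+1) * (h+1) := by nlinarith
        omega) a
      refine ⟨b, ih ((a, b) :: s) t' ?_ h1 (by
        have : (m+1) * (h+1) = m * (h+1) + (h+1) := by ring
        omega)⟩
      intro x hx
      rcases List.mem_cons.1 hx with rfl | hx
      · exact h2
      · exact h3 x (hsub x hx)
    · intro b
      obtain ⟨a, t'', h1, h2, h3, h4⟩ := extend_any (hyp_swap H) (t.map Prod.swap)
        (inv_swap hI) (by
          rw [List.length_map]
          have h2 : (h+1) ≤ (m+1) * (h+1) := by nlinarith
          omega) b
      refine ⟨a, ih ((a, b) :: s) (t''.map Prod.swap) ?_ (inv_swap h1) ?_⟩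
      · intro x hx
        rcases List.mem_cons.1 hx with rfl | hx
        · exact List.mem_map.2 ⟨(b, a), h2, rfl⟩
        · have : Prod.swap x ∈ t.map Prod.swap := List.mem_map.2 ⟨x, hsub x hx, rfl⟩
          have := h3 _ this
          exact List.mem_map.2 ⟨x.swap, this, by simp⟩
      · have : (t''.map Prod.swap).length = t''.length := by simp
        rw [this]
        have h5 : (t.map Prod.swap).length = t.length := by simp
        rw [h5] at h4
        have : (m+1) * (h+1) = m * (h+1) + (h+1) := by ring
        omega

end EFAux

namespace EFAux

variable {h : ℕ} (M : HForest h) (K k' : ℕ)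

def chSet (x : M.α) (l : ℕ) (c : ColorSig (h - (l+1))) : Set M.α :=
  {z | M.lt l x z ∧ sig K M (h - (l+1)) z = c}

noncomputable def pick (x : M.α) (l : ℕ) (c : ColorSig (h - (l+1))) : Set M.α :=
  (Set.exists_subset_encard_eq
    (s := chSet M K x l c) (k := min (k' : ℕ∞) (chSet M K x l c).encard)
    (min_le_right _ _)).choose

lemma pick_subset (x : M.α) (l : ℕ) (c : ColorSig (h - (l+1))) :
    pick M K k' x l c ⊆ chSet M K x l c :=
  (Set.exists_subset_encard_eq (s := chSet M K x l c)
    (k := min (k' : ℕ∞) (chSet M K x l c).encard) (min_le_right _ _)).choose_spec.1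

lemma pick_encard (x : M.α) (l : ℕ) (c : ColorSig (h - (l+1))) :
    (pick M K k' x l c).encard = min (k' : ℕ∞) (chSet M K x l c).encard :=
  (Set.exists_subset_encard_eq (s := chSet M K x l c)
    (k := min (k' : ℕ∞) (chSet M K x l c).encard) (min_le_right _ _)).choose_spec.2

lemma pick_finite (x : M.α) (l : ℕ) (c : ColorSig (h - (l+1))) :
    (pick M K k' x l c).Finite := by
  rw [← Set.encard_ne_top_iff, pick_encard]
  exact ne_top_of_le_ne_top (by simp) (min_le_left _ _)

def Kept : ℕ → M.α → Prop
  | 0, x => x ∈ M.P 0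
  | l+1, x => ∃ p, M.lt l p x ∧ Kept l p ∧ x ∈ pick M K k' p l (sig K M (h - (l+1)) x)

lemma kept_zero (x : M.α) : Kept M K k' 0 x ↔ x ∈ M.P 0 := Iff.rfl

lemma kept_succ (l : ℕ) (x : M.α) : Kept M K k' (l+1) x ↔
    ∃ p, M.lt l p x ∧ Kept M K k' l p ∧ x ∈ pick M K k' p l (sig K M (h - (l+1)) x) :=
  Iff.rfl

lemma kept_memP : ∀ l (x : M.α), Kept M K k' l x → x ∈ M.P l
  | 0, _, hx => hx
  | l+1, x, ⟨p, hlt, _, _⟩ => (M.dom l p x hlt).2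

noncomputable def Jchosen : Set M.α :=
  (Set.exists_subset_encard_eq (s := Junk M) (k := min (K : ℕ∞) (Junk M).encard)
    (min_le_right _ _)).choose

lemma Jchosen_subset : Jchosen M K ⊆ Junk M :=
  (Set.exists_subset_encard_eq (s := Junk M) (k := min (K : ℕ∞) (Junk M).encard)
    (min_le_right _ _)).choose_spec.1

lemma Jchosen_encard : (Jchosen M K).encard = min (K : ℕ∞) (Junk M).encard :=
  (Set.exists_subset_encard_eq (s := Junk M) (k := min (K : ℕ∞) (Junk M).encard)
    (min_le_right _ _)).choose_spec.2

lemma Jchosen_finite : (Jchosen M K).Finite := by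
  rw [← Set.encard_ne_top_iff, Jchosen_encard]
  exact ne_top_of_le_ne_top (by simp) (min_le_left _ _)

def Ydom : Set M.α := {x | (∃ l, Kept M K k' l x) ∨ x ∈ Jchosen M K}

noncomputable def Ytree : HForest h where
  α := {x : M.α // x ∈ Ydom M K k'}
  P i := {x | x.val ∈ M.P i}
  lt i x y := M.lt i x.val y.val
  disj i j hij x hx := M.disj i j hij x.val hx
  dom i x y hlt := M.dom i x.val y.val hlt
  exists_pred := by
    rintro i ⟨y, hy⟩ hyP
    rcases hy with ⟨l, hK⟩ | hJ
    · have hyl : y ∈ M.P l := kept_memP M K k' l y hK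
      have hli : l = i + 1 := by
        by_contra hne
        exact M.disj l (i+1) hne y hyl hyP
      subst hli
      obtain ⟨p, hlt, hKp, _⟩ := hK
      exact ⟨⟨p, Or.inl ⟨i, hKp⟩⟩, hlt⟩
    · exact absurd hyP (Jchosen_subset M K hJ (i+1))
  unique_pred i x x' y h1 h2 := Subtype.ext (M.unique_pred i x.val x'.val y.val h1 h2)
  bddP i hi := by
    ext x
    simp [M.bddP i hi]
  bddlt i hi x y := M.bddlt i hi x.val y.val

lemma kept_finite (htree : ∃! r, r ∈ M.P 0) : ∀ l, {x | Kept M K k' l x}.Finite := by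
  intro l
  induction l with
  | zero =>
    obtain ⟨r, hr, hru⟩ := htree
    refine (Set.finite_singleton r).subset ?_
    intro x hx
    exact hru x hx
  | succ l ih =>
    obtain ⟨S, hSfin, hSmem⟩ := sig_bounded K (h - (l+1))
    refine ((ih.biUnion (fun p _ => hSfin.biUnion
      (fun c _ => pick_finite M K k' p l c))).subset) ?_
    rintro x ⟨p, hlt, hKp, hpick⟩
    exact Set.mem_biUnion hKp (Set.mem_biUnion (hSmem _ M x) hpick)

lemma Ydom_finite (htree : ∃! r, r ∈ M.P 0) : (Ydom M K k').Finite := by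
  have h1 : Ydom M K k' ⊆ (⋃ l ∈ Set.Iic h, {x | Kept M K k' l x}) ∪ Jchosen M K := by
    rintro x (⟨l, hK⟩ | hJ)
    · left
      have hlh : l ≤ h := by
        by_contra hcon
        have := kept_memP M K k' l x hK
        rw [M.bddP l (by omega)] at this
        exact this
      exact Set.mem_biUnion hlh hK
    · right; exact hJ
  exact (((Set.finite_Iic h).biUnion (fun l _ => kept_finite M K k' htree l)).union
    (Jchosen_finite M K)).subset h1

lemma Ytree_root (htree : ∃! r, r ∈ M.P 0) : ∃! r, r ∈ (Ytree M K k').P 0 := by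
  obtain ⟨r, hr, hru⟩ := htree
  refine ⟨⟨r, Or.inl ⟨0, hr⟩⟩, hr, ?_⟩
  rintro ⟨y, hy⟩ hyP
  exact Subtype.ext (hru y hyP)

lemma min_min_eq {K k' : ℕ} (hKk' : K ≤ k') (e : ℕ∞) :
    min (K : ℕ∞) (min (k' : ℕ∞) e) = min (K : ℕ∞) e := by
  rw [← min_assoc]
  have hmm : min (K : ℕ∞) (k' : ℕ∞) = (K : ℕ∞) := min_eq_left (by exact_mod_cast hKk')
  rw [hmm]

lemma sig_transfer (hKk' : K ≤ k') (hk'1 : 1 ≤ k') :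
    ∀ d l, l + d = h → ∀ (x : M.α) (hK : Kept M K k' l x) (hx : x ∈ Ydom M K k'),
      sig K (Ytree M K k') d ⟨x, hx⟩ = sig K M d x := by
  intro d
  induction d with
  | zero => intro l hl x hK hx; rfl
  | succ d ih =>
    intro l hl x hK hx
    have hld : h - (l+1) = d := by omega
    subst hld
    have hlh : l + 1 ≤ h := by omega
    have hdl : h - ((h - (l+1)) + 1) = l := by omega
    -- fact (A) about children in Ytree
    have hA : ∀ (wv : M.α) (wp : wv ∈ Ydom M K k'), M.lt l x wv →
        Kept M K k' (l+1) wv ∧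
          sig K (Ytree M K k') (h - (l+1)) ⟨wv, wp⟩ = sig K M (h - (l+1)) wv := by
      intro wv wp hlt
      have hwP : wv ∈ M.P (l+1) := (M.dom l x wv hlt).2
      have hkept : Kept M K k' (l+1) wv := by
        rcases wp with ⟨l₁, hK₁⟩ | hJ
        · have : wv ∈ M.P l₁ := kept_memP M K k' l₁ wv hK₁
          have hl₁ : l₁ = l + 1 := by
            by_contra hne
            exact M.disj l₁ (l+1) hne wv this hwP
          rwa [hl₁] at hK₁
        · exact absurd hwP (Jchosen_subset M K hJ (l+1))
      exact ⟨hkept, ih (l+1) (by omega) wv hkept wp⟩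
    -- the set of Y-children of ⟨x,hx⟩ in class c, as a subset of M
    have hval : ∀ c : ColorSig (h - (l+1)),
        Subtype.val '' {w : (Ytree M K k').α |
          (Ytree M K k').lt l ⟨x, hx⟩ w ∧ sig K (Ytree M K k') (h - (l+1)) w = c}
        = pick M K k' x l c := by
      intro c
      apply Set.Subset.antisymm
      · rintro _ ⟨⟨wv, wp⟩, ⟨hlt, hsg⟩, rfl⟩
        obtain ⟨hkept, hsig⟩ := hA wv wp hlt
        obtain ⟨p, hplt, hKp, hpick⟩ := hkept
        have hpx : p = x := M.unique_pred l p x wv hplt hlt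
        subst hpx
        have : sig K M (h - (l+1)) wv = c := by rw [← hsig, hsg]
        rwa [this] at hpick
      · intro z hz
        obtain ⟨hzlt, hzsig⟩ := pick_subset M K k' x l c hz
        have hkept : Kept M K k' (l+1) z := ⟨x, hzlt, hK, by rwa [hzsig]⟩
        have hzY : z ∈ Ydom M K k' := Or.inl ⟨l+1, hkept⟩
        refine ⟨⟨z, hzY⟩, ⟨hzlt, ?_⟩, rfl⟩
        rw [ih (l+1) (by omega) z hkept hzY, hzsig]
    have hcnt : ∀ c : ColorSig (h - (l+1)),
        min (K : ℕ∞) {w : (Ytree M K k').α |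
          (Ytree M K k').lt l ⟨x, hx⟩ w ∧ sig K (Ytree M K k') (h - (l+1)) w = c}.encard
        = min (K : ℕ∞) (chSet M K x l c).encard := by
      intro c
      have h1 : {w : (Ytree M K k').α |
          (Ytree M K k').lt l ⟨x, hx⟩ w ∧ sig K (Ytree M K k') (h - (l+1)) w = c}.encard
          = (pick M K k' x l c).encard := by
        rw [← hval c]
        exact (Subtype.val_injective.injOn.encard_image).symm
      rw [h1, pick_encard, min_min_eq hKk']
    have hne : ∀ c : ColorSig (h - (l+1)),
        (∃ w : (Ytree M K k').α, (Ytree M K k').lt l ⟨x, hx⟩ w ∧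
          sig K (Ytree M K k') (h - (l+1)) w = c)
        ↔ (∃ z, M.lt l x z ∧ sig K M (h - (l+1)) z = c) := by
      intro c
      constructor
      · rintro ⟨⟨wv, wp⟩, hlt, hsg⟩
        obtain ⟨_, hsig⟩ := hA wv wp hlt
        exact ⟨wv, hlt, by rw [← hsig, hsg]⟩
      · rintro ⟨z, hzlt, hzsig⟩
        have hch : z ∈ chSet M K x l c := ⟨hzlt, hzsig⟩
        have hpe : (1 : ℕ∞) ≤ (pick M K k' x l c).encard := by
          rw [pick_encard]
          refine le_min (by exact_mod_cast hk'1) ?_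
          rw [Set.one_le_encard_iff_nonempty]
          exact ⟨z, hch⟩
        rw [Set.one_le_encard_iff_nonempty] at hpe
        obtain ⟨w, hw⟩ := hpe
        have := hval c
        rw [← this] at hw
        obtain ⟨w', hw', _⟩ := hw
        exact ⟨w', hw'.1, hw'.2⟩
    -- now prove the set equality
    refine Set.ext fun p => ?_
    obtain ⟨c, m⟩ := p
    rw [sig_succ, sig_succ K (Ytree M K k') (h - (l+1)) ⟨x, hx⟩]
    simp only [Set.mem_setOf_eq]
    rw [hdl]
    constructor
    · rintro ⟨hex, hm⟩
      exact ⟨(hne c).mp hex, by rw [hm]; exact congrArg ENat.toNat (hcnt c)⟩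
    · rintro ⟨hex, hm⟩
      exact ⟨(hne c).mpr hex, by rw [hm]; exact (congrArg ENat.toNat (hcnt c)).symm⟩

lemma junk_Ytree : Junk (Ytree M K k') = Subtype.val ⁻¹' (Jchosen M K) := by
  ext ⟨y, hy⟩
  constructor
  · intro hjunk
    rcases hy with ⟨l, hKl⟩ | hJ
    · exact absurd (kept_memP M K k' l y hKl) (hjunk l)
    · exact hJ
  · intro hJ i hi
    exact Jchosen_subset M K hJ i hi

lemma junk_Ytree_encard : (Junk (Ytree M K k')).encard = min (K : ℕ∞) (Junk M).encard := by
  rw [junk_Ytree, ← Jchosen_encard]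
  have himg : Subtype.val '' (Subtype.val ⁻¹' (Jchosen M K) :
      Set (Ytree M K k').α) = Jchosen M K := by
    apply Set.Subset.antisymm
    · rintro _ ⟨w, hw, rfl⟩
      exact hw
    · intro z hz
      exact ⟨⟨z, Or.inr hz⟩, hz, rfl⟩
  have h2 : (Subtype.val '' (Subtype.val ⁻¹' (Jchosen M K) :
      Set (Ytree M K k').α)).encard = (Subtype.val ⁻¹' (Jchosen M K) :
      Set (Ytree M K k').α).encard := Subtype.val_injective.injOn.encard_image
  rw [himg] at h2
  exact h2.symm

lemma hyp_Ytree (hKk' : K ≤ k') (hk'1 : 1 ≤ k') (htree : ∃! r, r ∈ M.P 0) :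
    Hyp K M (Ytree M K k') := by
  refine ⟨htree, Ytree_root M K k' htree, ?_, ?_⟩
  · rintro rF ⟨rG, hrG⟩ hrF hrGP
    obtain ⟨r, hr, hru⟩ := htree
    have h1 : rF = r := hru rF hrF
    have h2 : rG = r := hru rG hrGP
    subst h1
    have h3 : rG = rF := by rw [h2, ← hru rF hrF]
    subst h3
    have := sig_transfer M K k' hKk' hk'1 h 0 (by omega) rG hrF hrG
    exact this.symm
  · rw [junk_Ytree_encard, ← min_assoc, min_self]

lemma colorOf_root {F : HForest h} {r : F.α} (hr : r ∈ F.P 0) :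
    colorOf K F r = some ⟨⟨0, Nat.succ_pos h⟩, sig K F (h - 0) r⟩ := by
  have hx : ∃ l : Fin (h+1), r ∈ F.P ↑l := ⟨⟨0, Nat.succ_pos h⟩, hr⟩
  rw [colorOf]
  refine (dif_pos hx).trans ?_
  have hc : hx.choose = ⟨0, Nat.succ_pos h⟩ := by
    have hs := hx.choose_spec
    by_contra hne
    have hv : (hx.choose : ℕ) ≠ 0 := by
      intro h0
      apply hne
      apply Fin.ext
      simpa using h0
    exact F.disj _ 0 hv r hs hr
  rw [hc]

end EFAux

/-- fix `h > 0`, `n ∈ ω`, `k = n(h+1)`.  For every `h`-tree `M` (a single-rooted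
`h`-forest, possibly infinite) there is a finite `h`-tree `Y` whose root has the same
`(k,h)`-color as the root of `M`, such that Duplicator wins the `n`-round EF game between `M`
and `Y` over `L_h`. -/
theorem ef_approx_by_finite_tree (h n : ℕ) (hh : 0 < h) (M : HForest h)
    (htree : ∃! r, r ∈ M.P 0) :
    ∃ Y : HForest h, Finite Y.α ∧ (∃! r, r ∈ Y.P 0) ∧
      (∀ rM rY, rM ∈ M.P 0 → rY ∈ Y.P 0 →
        colorOf (n * (h + 1)) M rM = colorOf (n * (h + 1)) Y rY) ∧
      EFWin M Y n [] := by
  classical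
  set K := n * (h + 1) with hK
  set k' := max K 1 with hk'
  have hKk' : K ≤ k' := le_max_left _ _
  have hk'1 : 1 ≤ k' := le_max_right _ _
  have hHyp := EFAux.hyp_Ytree M K k' hKk' hk'1 htree
  refine ⟨EFAux.Ytree M K k', ?_, EFAux.Ytree_root M K k' htree, ?_, ?_⟩
  · exact (EFAux.Ydom_finite M K k' htree).to_subtype
  · intro rM rY hrM hrY
    rw [EFAux.colorOf_root K hrM, EFAux.colorOf_root K hrY]
    have hs := hHyp.2.2.1 rM rY hrM hrY
    exact congrArg (fun s => (some ⟨⟨0, Nat.succ_pos h⟩, s⟩ : Color h)) hs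
  · exact EFAux.ef_win hHyp n [] []
      (by simp)
      ⟨⟨by simp, by simp, by simp⟩, by simp, by simp, by simp⟩
      (by simp [hK])
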